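/- Let A ∈ ℝ^{n_s×n_s}, B_w ∈ ℝ^{n_s×n_q}, C ∈ ℝ^{n_o×n_s}, and define 𝐀 = [[A, B_w], [0, 0]] and 𝐂 = [C, 0], and for every real ε > 0 define 𝐀_ε = [[εA, B_w], [0, 0]], all acting on ℝ^{n_s+n_q}. If (𝐂, 𝐀) is observable, then (𝐂, 𝐀_ε) is observable for every ε > 0. -/

import Mathlib

open Matrix

/-- `(C, A)` is an observable pair: the only vector with `C A^k x = 0` for all `k` is `x = 0`. -/
def Observable {n p : Type*} [Fintype n] [DecidableEq n]
    (C : Matrix p n ℝ) (A : Matrix n n ℝ) : Prop :=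
  ∀ x : n → ℝ, (∀ k : ℕ, (C * A ^ k).mulVec x = 0) → x = 0

/-- Lemma 3: if the extended pair `(𝐂, 𝐀)` is observable, then so is `(𝐂, 𝐀_ε)` for every
`ε > 0`, where `𝐀_ε = [[εA, B_w], [0, 0]]`. -/
theorem extended_observable_eps {ns nq no : ℕ}
    (A : Matrix (Fin ns) (Fin ns) ℝ) (Bw : Matrix (Fin ns) (Fin nq) ℝ)
    (C : Matrix (Fin no) (Fin ns) ℝ)
    (h : Observable (Matrix.fromCols C 0) (Matrix.fromBlocks A Bw 0 0)) :
    ∀ ε : ℝ, 0 < ε →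
      Observable (Matrix.fromCols C 0) (Matrix.fromBlocks (ε • A) Bw 0 0) := by
  intro ε hε x hx
  have hε' : ε ≠ 0 := ne_of_gt hε
  set AA := Matrix.fromBlocks A Bw 0 0 with hAA
  set AE := Matrix.fromBlocks (ε • A) Bw (0 : Matrix (Fin nq) (Fin ns) ℝ) 0 with hAE
  set CC := Matrix.fromCols C (0 : Matrix (Fin no) (Fin nq) ℝ) with hCC
  set D := Matrix.fromBlocks (ε • (1 : Matrix (Fin ns) (Fin ns) ℝ)) 0 0
      (1 : Matrix (Fin nq) (Fin nq) ℝ) with hD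
  set E := Matrix.fromBlocks (1 : Matrix (Fin ns) (Fin ns) ℝ) 0 0
      (ε • (1 : Matrix (Fin nq) (Fin nq) ℝ)) with hE
  have hAD : AA * D = AE := by
    simp [hAA, hAE, hD, Matrix.fromBlocks_multiply, Matrix.mul_smul]
  have hDAε : D * AE = ε • AE := by
    simp [hAE, hD, Matrix.fromBlocks_multiply, Matrix.fromBlocks_smul]
  have hCD : CC * D = ε • CC := by
    rw [hCC, hD, Matrix.fromCols_mul_fromBlocks]
    ext i (j | j) <;> simp [Matrix.mul_smul]
  have hED : E * D = ε • (1 : Matrix (Fin ns ⊕ Fin nq) (Fin ns ⊕ Fin nq) ℝ) := by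
    simp [hE, hD, Matrix.fromBlocks_multiply, Matrix.fromBlocks_smul, ← Matrix.fromBlocks_one]
  -- power formula
  have hpow : ∀ k : ℕ, AE ^ (k + 1) = ε ^ k • (AA ^ k * AE) := by
    intro k
    induction k with
    | zero => simp
    | succ k ih =>
      have : AE * AE = ε • (AA * AE) := by
        nth_rewrite 1 [← hAD]
        rw [Matrix.mul_assoc, hDAε, Matrix.mul_smul]
      calc AE ^ (k + 2) = AE ^ (k + 1) * AE := by rw [pow_succ]
        _ = (ε ^ k • (AA ^ k * AE)) * AE := by rw [ih]
        _ = ε ^ k • (AA ^ k * (AE * AE)) := by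
            rw [Matrix.smul_mul, Matrix.mul_assoc]
        _ = ε ^ k • (AA ^ k * (ε • (AA * AE))) := by rw [this]
        _ = ε ^ (k + 1) • (AA ^ (k + 1) * AE) := by
            rw [Matrix.mul_smul, smul_smul, ← pow_succ, ← Matrix.mul_assoc, ← pow_succ]
  -- the vector z = AE x satisfies the original observability conditions
  have hz : ∀ k : ℕ, (CC * AA ^ k).mulVec (AE.mulVec x) = 0 := by
    intro k
    have h1 := hx (k + 1)
    rw [hpow k, Matrix.mul_smul] at h1
    rw [Matrix.smul_mulVec] at h1
    have h2 : ((CC * (AA ^ k * AE)).mulVec x) = 0 := by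
      have := smul_eq_zero.mp h1
      rcases this with h' | h'
      · exact absurd h' (pow_ne_zero k hε')
      · exact h'
    rw [← Matrix.mul_assoc] at h2
    rw [Matrix.mulVec_mulVec]
    exact h2
  -- the transformed vector y
  set y : Fin ns ⊕ Fin nq → ℝ := ε⁻¹ • D.mulVec x with hy
  have hyk : ∀ k : ℕ, (CC * AA ^ k).mulVec y = 0 := by
    intro k
    rw [hy, Matrix.mulVec_smul, Matrix.mulVec_mulVec]
    cases k with
    | zero =>
      rw [pow_zero, Matrix.mul_one, hCD]
      have h0 := hx 0
      rw [pow_zero, Matrix.mul_one] at h0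
      rw [Matrix.smul_mulVec, h0, smul_zero, smul_zero]
    | succ k =>
      rw [pow_succ, Matrix.mul_assoc (CC) _ _, Matrix.mul_assoc, hAD,
        ← Matrix.mul_assoc, ← Matrix.mulVec_mulVec, hz k, smul_zero]
  have hy0 : y = 0 := h y hyk
  -- recover x from y
  have hxy : x = E.mulVec y := by
    rw [hy, Matrix.mulVec_smul, Matrix.mulVec_mulVec, hED]
    rw [Matrix.smul_mulVec, Matrix.one_mulVec, smul_smul,
      inv_mul_cancel₀ hε', one_smul]
  rw [hxy, hy0, Matrix.mulVec_zero]
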